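/- Let p ≥ 2, q = p/(p−1), and Φ(x) = ‖x‖^p / p on ℝⁿ, where ‖·‖ is the Euclidean norm. Then there exists a constant c > 0 such that for all x, y ∈ ℝⁿ, x·y − Φ*(∇Φ(x)) + Φ*(∇Φ(x) − y) ≤ c ‖y‖^q, where Φ*(x) = ‖x‖^q / q is the Fenchel–Legendre conjugate of Φ. -/

import Mathlib

open scoped RealInnerProductSpace

/-- Tangent-line inequality for concave rpow: for `0 ≤ r ≤ 1`, `B ^ r` lies below the
tangent at `A`. -/
lemma tangent_rpow {A B r : ℝ} (hA : 0 < A) (hB : 0 ≤ B) (hr0 : 0 ≤ r) (hr1 : r ≤ 1) :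
    B ^ r ≤ A ^ r + r * A ^ (r - 1) * (B - A) := by
  have h1 : (-1:ℝ) ≤ B / A - 1 := by
    have : 0 ≤ B / A := div_nonneg hB hA.le
    linarith
  have h := rpow_one_add_le_one_add_mul_self h1 hr0 hr1
  have h2 : 1 + (B / A - 1) = B / A := by ring
  rw [h2] at h
  have hAr : 0 < A ^ r := Real.rpow_pos_of_pos hA r
  rw [Real.div_rpow hB hA.le, div_le_iff₀ hAr] at h
  calc B ^ r ≤ (1 + r * (B / A - 1)) * A ^ r := h
    _ = A ^ r + r * A ^ (r - 1) * (B - A) := by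
        rw [Real.rpow_sub hA, Real.rpow_one]
        field_simp

lemma sq_rpow_helper {t : ℝ} (ht : 0 ≤ t) (a : ℝ) :
    ((t ^ 2 : ℝ)) ^ a = t ^ (2 * a) := by
  rw [← Real.rpow_natCast t 2, ← Real.rpow_mul ht]
  norm_num

lemma grad_norm_rpow (n : ℕ) (p : ℝ) (hp : 2 ≤ p) (x : EuclideanSpace ℝ (Fin n)) :
    HasGradientAt (fun z : EuclideanSpace ℝ (Fin n) => ‖z‖ ^ p / p)
      ((‖x‖ ^ (p - 2)) • x) x := by
  have hp0 : (0:ℝ) < p := by linarith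
  have h1 : HasFDerivAt (fun z : EuclideanSpace ℝ (Fin n) => ‖z‖ ^ 2)
      (2 • (innerSL ℝ x)) x := (hasStrictFDerivAt_norm_sq x).hasFDerivAt
  have h2 : HasDerivAt (fun t : ℝ => t ^ (p / 2) / p)
      ((p / 2 * (‖x‖ ^ 2 : ℝ) ^ (p / 2 - 1)) / p) ((‖x‖ ^ 2 : ℝ)) :=
    (Real.hasDerivAt_rpow_const (Or.inr (by linarith))).div_const p
  have h3 := h2.comp_hasFDerivAt x h1
  have hfun : (fun z : EuclideanSpace ℝ (Fin n) => ‖z‖ ^ p / p)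
      = (fun t : ℝ => t ^ (p / 2) / p) ∘ (fun z : EuclideanSpace ℝ (Fin n) => ‖z‖ ^ 2) := by
    funext z
    simp only [Function.comp_apply]
    rw [sq_rpow_helper (norm_nonneg z), show (2:ℝ) * (p / 2) = p by ring]
  rw [hfun, hasGradientAt_iff_hasFDerivAt]
  convert h3 using 1
  swap
  ext y
  simp only [InnerProductSpace.toDual_apply_apply, real_inner_smul_left,
    ContinuousLinearMap.smul_apply, ContinuousLinearMap.coe_smul', Pi.smul_apply,
    innerSL_apply_apply, smul_eq_mul]
  rw [sq_rpow_helper (norm_nonneg x)]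
  have : 2 * (p / 2 - 1) = p - 2 := by ring
  rw [this]
  field_simp
  ring
  ext; rfl

theorem bobkov_ledoux_power_bound (n : ℕ) (p q : ℝ) (hp : 2 ≤ p) (hq : q = p / (p - 1)) :
    ∃ c > (0:ℝ), ∀ x y : EuclideanSpace ℝ (Fin n),
      ⟪x, y⟫ - ‖gradient (fun z : EuclideanSpace ℝ (Fin n) => ‖z‖ ^ p / p) x‖ ^ q / q
        + ‖gradient (fun z : EuclideanSpace ℝ (Fin n) => ‖z‖ ^ p / p) x - y‖ ^ q / q
      ≤ c * ‖y‖ ^ q := by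
  have hp1 : (0:ℝ) < p - 1 := by linarith
  have hq1 : 1 < q := by
    rw [hq, lt_div_iff₀ hp1]; linarith
  have hq2 : q ≤ 2 := by
    rw [hq, div_le_iff₀ hp1]; linarith
  have hq0 : (0:ℝ) < q := by linarith
  have hpq : (p - 1) * q = p := by
    rw [hq]; field_simp
  refine ⟨5, by norm_num, fun x y => ?_⟩
  rw [(grad_norm_rpow n p hp x).gradient]
  set g : EuclideanSpace ℝ (Fin n) := (‖x‖ ^ (p - 2)) • x with hgdef
  have hgn : ‖g‖ = ‖x‖ ^ (p - 1) := by
    rw [hgdef, norm_smul, Real.norm_eq_abs,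
      abs_of_nonneg (Real.rpow_nonneg (norm_nonneg x) _)]
    rcases eq_or_lt_of_le (norm_nonneg x) with h0 | h0
    · rw [← h0, mul_zero, Real.zero_rpow (ne_of_gt hp1)]
    · rw [← Real.rpow_add_one h0.ne' (p - 2), show p - 2 + 1 = p - 1 by ring]
  rcases eq_or_lt_of_le (norm_nonneg y) with hy0 | hy0
  · -- y = 0
    have : y = 0 := by rw [← norm_eq_zero]; exact hy0.symm
    subst this
    simp only [inner_zero_right, sub_zero, norm_zero]
    rw [Real.zero_rpow hq0.ne']
    ring_nf
    simp
  rcases le_or_gt ‖g‖ ‖y‖ with hcase | hcase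
  · -- small case : ‖g‖ ≤ ‖y‖
    have hb : ⟪x, y⟫ ≤ ‖y‖ ^ q := by
      have h1 : ⟪x, y⟫ ≤ ‖x‖ * ‖y‖ := real_inner_le_norm x y
      have h2 : ‖x‖ ≤ ‖y‖ ^ (q - 1) := by
        have h3 : (‖x‖ ^ (p-1)) ^ ((p-1)⁻¹) ≤ ‖y‖ ^ ((p-1)⁻¹) := by
          apply Real.rpow_le_rpow (Real.rpow_nonneg (norm_nonneg x) _)
            (hgn ▸ hcase) (by positivity)
        rw [← Real.rpow_mul (norm_nonneg x), mul_inv_cancel₀ hp1.ne',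
          Real.rpow_one] at h3
        have : q - 1 = (p - 1)⁻¹ := by rw [hq]; field_simp; ring
        rw [this]; exact h3
      calc ⟪x, y⟫ ≤ ‖x‖ * ‖y‖ := h1
        _ ≤ ‖y‖ ^ (q - 1) * ‖y‖ := by
            apply mul_le_mul_of_nonneg_right h2 (norm_nonneg y)
        _ = ‖y‖ ^ q := by
            rw [← Real.rpow_add_one hy0.ne' (q - 1)]; norm_num
    have hsub : ‖g - y‖ ^ q ≤ 4 * ‖y‖ ^ q := by
      have h1 : ‖g - y‖ ≤ 2 * ‖y‖ := by
        calc ‖g - y‖ ≤ ‖g‖ + ‖y‖ := norm_sub_le g y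
          _ ≤ 2 * ‖y‖ := by linarith
      calc ‖g - y‖ ^ q ≤ (2 * ‖y‖) ^ q :=
            Real.rpow_le_rpow (norm_nonneg _) h1 hq0.le
        _ = 2 ^ q * ‖y‖ ^ q := Real.mul_rpow (by norm_num) (norm_nonneg y)
        _ ≤ 4 * ‖y‖ ^ q := by
            apply mul_le_mul_of_nonneg_right _ (Real.rpow_nonneg (norm_nonneg y) q)
            calc (2:ℝ) ^ q ≤ 2 ^ (2:ℝ) :=
                  Real.rpow_le_rpow_of_exponent_le one_le_two hq2
              _ = 4 := by
                  rw [show (2:ℝ) = ((2:ℕ):ℝ) by norm_num, Real.rpow_natCast]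
                  norm_num
    have hmid : 0 ≤ ‖g‖ ^ q / q := by positivity
    have hdiv : ‖g - y‖ ^ q / q ≤ 4 * ‖y‖ ^ q := by
      calc ‖g - y‖ ^ q / q ≤ ‖g - y‖ ^ q :=
            div_le_self (Real.rpow_nonneg (norm_nonneg _) q) (by linarith)
        _ ≤ 4 * ‖y‖ ^ q := hsub
    linarith
  · -- large case : ‖y‖ < ‖g‖
    have hgpos : (0:ℝ) < ‖g‖ := lt_trans hy0 hcase
    have hxpos : (0:ℝ) < ‖x‖ := by
      by_contra h
      push_neg at h
      have hx0 : ‖x‖ = 0 := le_antisymm h (norm_nonneg x)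
      have hg0 : g = 0 := by
        rw [hgdef, norm_eq_zero.mp hx0, smul_zero]
      rw [hg0, norm_zero] at hgpos
      exact lt_irrefl 0 hgpos
    -- tangent line bound
    have htan := tangent_rpow (A := ‖g‖ ^ 2) (B := ‖g - y‖ ^ 2) (r := q / 2)
      (by positivity) (by positivity) (by positivity) (by linarith)
    rw [sq_rpow_helper (norm_nonneg g), sq_rpow_helper (norm_nonneg (g - y))] at htan
    have hq2' : 2 * (q / 2) = q := by ring
    rw [hq2'] at htan
    have hexp : (‖g‖ ^ 2 : ℝ) ^ (q / 2 - 1) = ‖g‖ ^ (q - 2) := by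
      rw [sq_rpow_helper (norm_nonneg g)]
      congr 1; ring
    rw [hexp] at htan
    have hBA : ‖g - y‖ ^ 2 - ‖g‖ ^ 2 = ‖y‖ ^ 2 - 2 * ⟪g, y⟫ := by
      rw [norm_sub_sq_real]; ring
    rw [hBA] at htan
    have hinner : ⟪g, y⟫ = ‖x‖ ^ (p - 2) * ⟪x, y⟫ := by
      rw [hgdef, real_inner_smul_left]
    -- key cancellation: ‖g‖^(q-2) * ‖x‖^(p-2) = 1
    have hcancel : ‖g‖ ^ (q - 2) * ‖x‖ ^ (p - 2) = 1 := by
      rw [hgn, ← Real.rpow_mul (norm_nonneg x), ← Real.rpow_add hxpos]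
      have hz : (p - 1) * (q - 2) + (p - 2) = 0 := by nlinarith [hpq]
      rw [hz, Real.rpow_zero]
    have htanq : ‖g - y‖ ^ q / q ≤ ‖g‖ ^ q / q
        + (1/2) * ‖g‖ ^ (q - 2) * (‖y‖ ^ 2 - 2 * ⟪g, y⟫) := by
      have h1 : ‖g - y‖ ^ q / q
          ≤ (‖g‖ ^ q + q / 2 * ‖g‖ ^ (q - 2) * (‖y‖ ^ 2 - 2 * ⟪g, y⟫)) / q := by
        gcongr
      calc ‖g - y‖ ^ q / q
          ≤ (‖g‖ ^ q + q / 2 * ‖g‖ ^ (q - 2) * (‖y‖ ^ 2 - 2 * ⟪g, y⟫)) / q := h1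
        _ = ‖g‖ ^ q / q + (1/2) * ‖g‖ ^ (q - 2) * (‖y‖ ^ 2 - 2 * ⟪g, y⟫) := by
            field_simp
    have hsubst : (1/2) * ‖g‖ ^ (q - 2) * (‖y‖ ^ 2 - 2 * ⟪g, y⟫)
        = (1/2) * ‖g‖ ^ (q - 2) * ‖y‖ ^ 2 - ⟪x, y⟫ := by
      rw [hinner]
      linear_combination (-⟪x, y⟫) * hcancel
    have hE : ⟪x, y⟫ - ‖g‖ ^ q / q + ‖g - y‖ ^ q / q
        ≤ (1/2) * ‖g‖ ^ (q - 2) * ‖y‖ ^ 2 := by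
      linarith [htanq, hsubst]
    have hmono : ‖g‖ ^ (q - 2) ≤ ‖y‖ ^ (q - 2) :=
      Real.rpow_le_rpow_of_nonpos hy0 hcase.le (by linarith)
    have hfin : (1/2) * ‖g‖ ^ (q - 2) * ‖y‖ ^ 2 ≤ (1/2) * ‖y‖ ^ q := by
      have h2 : (1/2) * ‖g‖ ^ (q - 2) * ‖y‖ ^ 2 ≤ (1/2) * ‖y‖ ^ (q - 2) * ‖y‖ ^ 2 := by
        have hy2 : (0:ℝ) ≤ ‖y‖ ^ 2 := by positivity
        nlinarith
      have h3 : (1/2) * ‖y‖ ^ (q - 2) * ‖y‖ ^ 2 = (1/2) * ‖y‖ ^ q := by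
        rw [mul_assoc, ← Real.rpow_natCast ‖y‖ 2, ← Real.rpow_add hy0]
        norm_num
      linarith
    have hyq : (0:ℝ) ≤ ‖y‖ ^ q := Real.rpow_nonneg (norm_nonneg y) q
    linarith
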